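/- Let X be a compact metric space and f₁,…,f_k homeomorphisms of X such that X is chain transitive for the generated IFS, and let ℙ be the Bernoulli measure on Σ = {1,…,k}^ℕ with strictly positive weights. Then for every x ∈ X there is Ω(x) ⊆ Σ with ℙ(Ω(x)) = 1 such that for every ω ∈ Ω(x), every y ∈ X, and every δ > 0, there is a δ-chain in direction of ω from x to y (i.e., points x = x₀,…,xₙ = y with d(x_{i+1}, f_{ω_{i+1}}(x_i)) < δ). -/

import Mathlib

open MeasureTheory
open scoped ENNReal

/-- `isChain f δ ω x y`: there is a δ-chain from `x` to `y` in direction of `ω`. -/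
def isChain {X : Type*} [MetricSpace X] {k : ℕ} (f : Fin k → X → X) (δ : ℝ)
    (ω : ℕ → Fin k) (x y : X) : Prop :=
  ∃ n : ℕ, 1 ≤ n ∧ ∃ c : ℕ → X, c 0 = x ∧ c n = y ∧
    ∀ i < n, dist (c (i + 1)) (f (ω i) (c i)) < δ

namespace Stmt9Aux




variable {k : ℕ}

/-- Cylinder of length `m`. -/
def Cyl (m : ℕ) (v : Fin m → Fin k) : Set (ℕ → Fin k) :=
  {ω | ∀ i : Fin m, ω i = v i}

lemma measurableSet_cyl (m : ℕ) (v : Fin m → Fin k) : MeasurableSet (Cyl m v) := by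
  have h : Cyl m v = ⋂ i : Fin m, (fun ω : ℕ → Fin k => ω (i : ℕ)) ⁻¹' {v i} := by
    ext ω; simp [Cyl]
  rw [h]
  exact MeasurableSet.iInter fun i =>
    (measurable_pi_apply (i : ℕ)) (measurableSet_singleton (v i))

lemma cyl_disjoint (m : ℕ) {v v' : Fin m → Fin k} (h : v ≠ v') :
    Disjoint (Cyl m v) (Cyl m v') :=
  Set.disjoint_left.2 fun ω h1 h2 => h (funext fun i => (h1 i).symm.trans (h2 i))

/-- `B` is determined by its first `m` coordinates. -/
def Det (m : ℕ) (B : Set (ℕ → Fin k)) : Prop :=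
  ∀ ω ω' : ℕ → Fin k, (∀ i, i < m → ω i = ω' i) → ω ∈ B → ω' ∈ B

noncomputable def extWord [Nonempty (Fin k)] (m : ℕ) (v : Fin m → Fin k) : ℕ → Fin k :=
  fun i => if h : i < m then v ⟨i, h⟩ else Classical.arbitrary _

lemma extWord_agree [Nonempty (Fin k)] (m : ℕ) (v : Fin m → Fin k) (i : ℕ) (hi : i < m) :
    extWord m v i = v ⟨i, hi⟩ := dif_pos hi

lemma det_measurableSet [Nonempty (Fin k)] {m : ℕ} {B : Set (ℕ → Fin k)} (hB : Det m B) :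
    MeasurableSet B := by
  classical
  have h : B = ⋃ v ∈ {v : Fin m → Fin k | extWord m v ∈ B}, Cyl m v := by
    ext ω
    constructor
    · intro hω
      refine Set.mem_biUnion (?_ : extWord m (fun i : Fin m => ω i) ∈ B) ?_
      · exact hB ω _ (fun i hi => by rw [extWord_agree m _ i hi]) hω
      · exact fun i => rfl
    · rintro h
      obtain ⟨v, hv, hω⟩ := Set.mem_iUnion₂.1 h
      exact hB (extWord m v) ω
        (fun i hi => (extWord_agree m v i hi).trans (hω ⟨i, hi⟩).symm) hv
  rw [h]
  exact MeasurableSet.biUnion (Set.to_countable _) fun v _ => measurableSet_cyl m v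

/-- Orbit of `x` under the IFS driven by `ω`. -/
def orbit {X : Type*} (f : Fin k → X → X) (x : X) : ℕ → (ℕ → Fin k) → X
  | 0, _ => x
  | (m+1), ω => f (ω m) (orbit f x m ω)

lemma orbit_congr {X : Type*} (f : Fin k → X → X) (x : X) (m : ℕ)
    {ω ω' : ℕ → Fin k} (h : ∀ i, i < m → ω i = ω' i) :
    orbit f x m ω = orbit f x m ω' := by
  induction m with
  | zero => rfl
  | succ m ih =>
    simp only [orbit, h m (Nat.lt_succ_self m),
      ih (fun i hi => h i (hi.trans (Nat.lt_succ_self m)))]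

lemma cyl_append_subset (m n : ℕ) (v : Fin m → Fin k) (w : Fin n → Fin k) :
    Cyl (m + n) (Fin.append v w) ⊆ Cyl m v := by
  intro ω hω i
  have h := hω (Fin.castAdd n i)
  rwa [Fin.append_left, Fin.coe_castAdd] at h

lemma step (μ : Measure (ℕ → Fin k)) [IsProbabilityMeasure μ] [Nonempty (Fin k)]
    (pw : Fin k → ℝ≥0∞)
    (hcyl : ∀ (n : ℕ) (w : Fin n → Fin k),
      μ {ω | ∀ i : Fin n, ω i = w i} = ∏ i, pw (w i))
    (β : ℝ≥0∞) (hβ : β ≤ 1) (m : ℕ)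
    (B S : Set (ℕ → Fin k)) (hB : Det m B) (hBS : MeasurableSet (B ∩ Sᶜ))
    (hword : ∀ v : Fin m → Fin k, ∃ (n : ℕ) (w : Fin n → Fin k),
      β ≤ ∏ i, pw (w i) ∧ Cyl (m + n) (Fin.append v w) ⊆ S) :
    μ (B ∩ Sᶜ) ≤ (1 - β) * μ B := by
  classical
  choose nn ww hβw hSsub using hword
  set V : Finset (Fin m → Fin k) := Finset.univ.filter (fun v => Cyl m v ⊆ B) with hV
  have hBeq : B = ⋃ v ∈ V, Cyl m v := by
    ext ω
    constructor
    · intro hω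
      refine Set.mem_iUnion₂.2 ⟨fun i : Fin m => ω i, ?_, fun i => rfl⟩
      simp only [hV, Finset.mem_filter, Finset.mem_univ, true_and]
      intro ω' hω'
      exact hB ω ω' (fun i hi => (hω' ⟨i, hi⟩).symm) hω
    · intro h
      obtain ⟨v, hv, hω⟩ := Set.mem_iUnion₂.1 h
      exact (Finset.mem_filter.1 hv).2 hω
  have hmuB : μ B = ∑ v ∈ V, μ (Cyl m v) := by
    rw [hBeq]
    exact measure_biUnion_finset
      (fun v _ v' _ hne => cyl_disjoint m hne) (fun v _ => measurableSet_cyl m v)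
  -- the "good" sets
  have hGood : ∀ v : Fin m → Fin k, Cyl (m + nn v) (Fin.append v (ww v)) ⊆ Cyl m v :=
    fun v => cyl_append_subset m (nn v) v (ww v)
  have hGoodMeas : ∀ v : Fin m → Fin k,
      μ (Cyl (m + nn v) (Fin.append v (ww v))) = (∏ i, pw (v i)) * ∏ i, pw (ww v i) := by
    intro v
    have h := hcyl (m + nn v) (Fin.append v (ww v))
    rw [show {ω : ℕ → Fin k | ∀ i : Fin (m + nn v), ω i = Fin.append v (ww v) i}
        = Cyl (m + nn v) (Fin.append v (ww v)) from rfl] at h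
    rw [h, Fin.prod_univ_add]
    congr 1
    · exact Finset.prod_congr rfl fun i _ => by rw [Fin.append_left]
    · exact Finset.prod_congr rfl fun i _ => by rw [Fin.append_right]
  have hlow : β * μ B ≤ μ (B ∩ S) := by
    have hdisj : (↑V : Set (Fin m → Fin k)).Pairwise
        (Function.onFun Disjoint fun v => Cyl (m + nn v) (Fin.append v (ww v))) := by
      intro v _ v' _ hne
      exact (cyl_disjoint m hne).mono (hGood v) (hGood v')
    have hunion : μ (⋃ v ∈ V, Cyl (m + nn v) (Fin.append v (ww v)))
        = ∑ v ∈ V, μ (Cyl (m + nn v) (Fin.append v (ww v))) :=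
      measure_biUnion_finset hdisj (fun v _ => measurableSet_cyl _ _)
    have hsub : (⋃ v ∈ V, Cyl (m + nn v) (Fin.append v (ww v))) ⊆ B ∩ S := by
      refine Set.iUnion₂_subset fun v hv => Set.subset_inter ?_ (hSsub v)
      exact (hGood v).trans (by rw [hBeq]; exact Set.subset_biUnion_of_mem hv)
    calc β * μ B = ∑ v ∈ V, β * μ (Cyl m v) := by rw [hmuB, Finset.mul_sum]
      _ ≤ ∑ v ∈ V, μ (Cyl (m + nn v) (Fin.append v (ww v))) := by
          refine Finset.sum_le_sum fun v _ => ?_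
          rw [hGoodMeas v, show μ (Cyl m v) = ∏ i, pw (v i) from hcyl m v]
          exact mul_comm β _ ▸ mul_le_mul_right (hβw v) _
      _ = μ (⋃ v ∈ V, Cyl (m + nn v) (Fin.append v (ww v))) := hunion.symm
      _ ≤ μ (B ∩ S) := measure_mono hsub
  have hsplit : μ (B ∩ Sᶜ) + μ (B ∩ S) = μ B := by
    have h := measure_inter_add_diff (μ := μ) B hBS
    have h1 : B ∩ (B ∩ Sᶜ) = B ∩ Sᶜ :=
      Set.inter_eq_self_of_subset_right Set.inter_subset_left
    have h2 : B \ (B ∩ Sᶜ) = B ∩ S := by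
      ext ω; simp only [Set.mem_diff, Set.mem_inter_iff, Set.mem_compl_iff]; tauto
    rwa [h1, h2] at h
  have hfin : β * μ B ≠ ⊤ :=
    ENNReal.mul_ne_top (ne_top_of_le_ne_top ENNReal.one_ne_top hβ) (measure_ne_top μ B)
  have h1 : μ (B ∩ Sᶜ) + β * μ B ≤ μ B := by
    calc μ (B ∩ Sᶜ) + β * μ B ≤ μ (B ∩ Sᶜ) + μ (B ∩ S) := add_le_add_right hlow _
      _ = μ B := hsplit
  have h2 : μ (B ∩ Sᶜ) ≤ μ B - β * μ B := ENNReal.le_sub_of_add_le_right hfin h1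
  rw [ENNReal.sub_mul (fun _ _ => measure_ne_top μ B), one_mul]
  exact h2


lemma chain_null {X : Type*} [MetricSpace X] [CompactSpace X] {k : ℕ}
    (f : Fin k → X ≃ₜ X)
    (hct : ∀ p q : X, ∀ δ : ℝ, 0 < δ →
      ∃ ω : ℕ → Fin k, isChain (fun i => ⇑(f i)) δ ω p q)
    (μ : Measure (ℕ → Fin k)) [IsProbabilityMeasure μ]
    (pw : Fin k → ℝ≥0∞) (hpos : ∀ i, 0 < pw i) (hsum : ∑ i, pw i = 1)
    (hcyl : ∀ (n : ℕ) (w : Fin n → Fin k),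
      μ {ω | ∀ i : Fin n, ω i = w i} = ∏ i, pw (w i))
    (x y : X) (δ : ℝ) (hδ : 0 < δ) :
    ∃ B : Set (ℕ → Fin k), MeasurableSet B ∧ μ B = 0 ∧
      ∀ ω ∉ B, isChain (fun i => ⇑(f i)) δ ω x y := by
  classical
  have hk : k ≠ 0 := by rintro rfl; simpa using hsum
  have hne : Nonempty (Fin k) := ⟨⟨0, Nat.pos_of_ne_zero hk⟩⟩
  -- local data: around every point a ball from which a fixed word δ-chains to y
  have key : ∀ p : X, ∃ (η : ℝ) (n : ℕ) (w : ℕ → Fin k), 0 < η ∧ 1 ≤ n ∧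
      ∀ p', dist p' p < η → ∃ c : ℕ → X, c 0 = p' ∧ c n = y ∧
        ∀ i < n, dist (c (i + 1)) ((f (w i)) (c i)) < δ := by
    intro p
    obtain ⟨w, n, hn, c, hc0, hcn, hstep⟩ := hct p y (δ / 2) (by linarith)
    have hd1 : dist (c 1) ((f (w 0)) p) < δ / 2 := by
      have := hstep 0 hn; rwa [hc0] at this
    have hcont := ((f (w 0)).continuous.continuousAt (x := p))
    rw [Metric.continuousAt_iff] at hcont
    obtain ⟨η, hη, hball⟩ := hcont (δ - dist (c 1) ((f (w 0)) p)) (by linarith)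
    refine ⟨η, n, w, hη, hn, fun p' hp' => ?_⟩
    refine ⟨Function.update c 0 p', Function.update_self 0 p' c, ?_, ?_⟩
    · rw [Function.update_of_ne (by omega) _ _]; exact hcn
    · intro i hi
      rcases Nat.eq_zero_or_pos i with rfl | hipos
      · rw [Function.update_of_ne (by omega) _ _, Function.update_self]
        calc dist (c 1) ((f (w 0)) p')
            ≤ dist (c 1) ((f (w 0)) p) + dist ((f (w 0)) p) ((f (w 0)) p') :=
              dist_triangle _ _ _
          _ < dist (c 1) ((f (w 0)) p) + (δ - dist (c 1) ((f (w 0)) p)) := by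
              have := hball hp'
              rw [dist_comm] at this
              linarith
          _ = δ := by ring
      · rw [Function.update_of_ne (by omega) _ _, Function.update_of_ne (by omega) _ _]
        exact lt_trans (hstep i hi) (by linarith)
  choose η nn ww hη hn1 hkey using key
  -- finite subcover
  obtain ⟨T, hT⟩ := isCompact_univ.elim_finite_subcover
      (fun p : X => Metric.ball p (η p)) (fun p => Metric.isOpen_ball)
      (fun q _ => Set.mem_iUnion.2 ⟨q, Metric.mem_ball_self (hη q)⟩)
  have hTx : ∀ q : X, ∃ p, p ∈ T ∧ dist q p < η p := by
    intro q
    have h := hT (Set.mem_univ q)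
    simp only [Set.mem_iUnion, Metric.mem_ball, exists_prop] at h
    exact h
  choose sel hselT hseld using hTx
  set N : ℕ := T.sup nn with hNdef
  have hNle : ∀ q : X, nn (sel q) ≤ N := fun q => Finset.le_sup (hselT q)
  -- minimal weight
  have hune : (Finset.univ : Finset (Fin k)).Nonempty := Finset.univ_nonempty
  set pmin : ℝ≥0∞ := Finset.univ.inf' hune pw with hpmin
  have hpmin_pos : 0 < pmin := (Finset.lt_inf'_iff hune).2 fun i _ => hpos i
  have hpmin_le : ∀ i, pmin ≤ pw i := fun i => Finset.inf'_le _ (Finset.mem_univ i)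
  have hpw_le_one : ∀ i, pw i ≤ 1 := fun i =>
    hsum ▸ Finset.single_le_sum (f := pw) (fun _ _ => zero_le) (Finset.mem_univ i)
  have hpmin_le_one : pmin ≤ 1 := le_trans (hpmin_le (Classical.arbitrary _)) (hpw_le_one _)
  set β : ℝ≥0∞ := pmin ^ N with hβdef
  have hβ1 : β ≤ 1 := pow_le_one' hpmin_le_one N
  have hβ0 : β ≠ 0 := pow_ne_zero N hpmin_pos.ne'
  -- success and failure sets
  set F : Fin k → X → X := fun i => ⇑(f i) with hF
  set Succ : ℕ → Set (ℕ → Fin k) := fun m =>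
    {ω | ∀ i < nn (sel (orbit F x m ω)), ω (m + i) = ww (sel (orbit F x m ω)) i} with hSucc
  set Fail : ℕ → Set (ℕ → Fin k) := fun J => {ω | ∀ j < J, ω ∉ Succ (j * N)} with hFail
  -- success implies a chain
  have succ_chain : ∀ m : ℕ, ∀ ω, ω ∈ Succ m → isChain F δ ω x y := by
    intro m ω hω
    set p' : X := orbit F x m ω with hp'
    set p : X := sel p' with hp
    obtain ⟨c, hc0, hcn, hstep⟩ := hkey p p' (hseld p')
    refine ⟨m + nn p, by have := hn1 p; omega,
      fun i => if i ≤ m then orbit F x i ω else c (i - m), ?_, ?_, ?_⟩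
    · simp [orbit]
    · beta_reduce
      rw [if_neg (by have := hn1 p; omega), Nat.add_sub_cancel_left]; exact hcn
    · intro i hi
      beta_reduce
      by_cases him : i < m
      · rw [if_pos (by omega), if_pos (by omega)]
        simpa [orbit] using hδ
      · obtain ⟨j, rfl, hj⟩ : ∃ j, i = m + j ∧ j < nn p := ⟨i - m, by omega, by omega⟩
        have hωj : ω (m + j) = ww p j := hω j hj
        have hC1 : (if m + j + 1 ≤ m then orbit F x (m + j + 1) ω else c (m + j + 1 - m))
            = c (j + 1) := by rw [if_neg (by omega)]; congr 1; omega
        have hC0 : (if m + j ≤ m then orbit F x (m + j) ω else c (m + j - m)) = c j := by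
          rcases Nat.eq_zero_or_pos j with rfl | hjpos
          · rw [if_pos (by omega)]; simpa [hp'] using hc0.symm
          · rw [if_neg (by omega)]; congr 1; omega
        rw [hC1, hC0, hωj]
        exact hstep j hj
  -- Succ m is determined by coordinates < m + N
  have succ_det : ∀ m : ℕ, Det (m + N) (Succ m) := by
    intro m ω ω' hagree hω
    have horb : orbit F x m ω = orbit F x m ω' :=
      orbit_congr F x m (fun i hi => hagree i (by omega))
    intro i hi
    rw [← horb] at hi ⊢
    rw [← hagree (m + i) (by have := hNle (orbit F x m ω); omega)]
    exact hω i hi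
  have fail_det : ∀ J : ℕ, Det (J * N) (Fail J) := by
    intro J ω ω' hagree hω j hj hmem
    refine hω j hj (succ_det (j * N) ω' ω (fun i hi => ?_) hmem)
    exact (hagree i (by
      have h1 : j * N + N = (j + 1) * N := by ring
      have h2 : (j + 1) * N ≤ J * N := Nat.mul_le_mul_right N hj
      omega)).symm
  have fail_meas : ∀ J : ℕ, MeasurableSet (Fail J) :=
    fun J => det_measurableSet (fail_det J)
  have fail_succ : ∀ J : ℕ, Fail (J + 1) = Fail J ∩ (Succ (J * N))ᶜ := by
    intro J
    ext ω
    simp only [hFail, Set.mem_setOf_eq, Set.mem_inter_iff, Set.mem_compl_iff]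
    constructor
    · exact fun h => ⟨fun j hj => h j (by omega), h J (by omega)⟩
    · rintro ⟨h1, h2⟩ j hj
      rcases Nat.lt_succ_iff_lt_or_eq.1 hj with hj' | rfl
      · exact h1 j hj'
      · exact h2
  -- measure bound by induction
  have bound : ∀ J : ℕ, μ (Fail J) ≤ (1 - β) ^ J := by
    intro J
    induction J with
    | zero =>
      have huniv : Fail 0 = Set.univ :=
        Set.eq_univ_iff_forall.2 (fun ω j hj => absurd hj (Nat.not_lt_zero j))
      rw [huniv, pow_zero, measure_univ]
    | succ J ih =>
      rw [fail_succ J]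
      have hstep := step μ pw hcyl β hβ1 (J * N) (Fail J) (Succ (J * N)) (fail_det J)
        (by rw [← fail_succ J]; exact fail_meas (J + 1)) ?_
      · calc μ (Fail J ∩ (Succ (J * N))ᶜ) ≤ (1 - β) * μ (Fail J) := hstep
          _ ≤ (1 - β) * (1 - β) ^ J := mul_le_mul_right ih _
          _ = (1 - β) ^ (J + 1) := by rw [pow_succ, mul_comm]
      · -- word hypothesis
        intro v
        set ωv : ℕ → Fin k := extWord (J * N) v with hωv
        set q : X := sel (orbit F x (J * N) ωv) with hq
        refine ⟨nn q, fun i => ww q i, ?_, ?_⟩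
        · calc β = pmin ^ N := rfl
            _ ≤ pmin ^ nn q := pow_le_pow_of_le_one zero_le hpmin_le_one (hNle _)
            _ = ∏ _i : Fin (nn q), pmin := by simp [Finset.prod_const]
            _ ≤ ∏ i : Fin (nn q), pw (ww q i) :=
              Finset.prod_le_prod' fun i _ => hpmin_le _
        · intro ω hω
          have hagree : ∀ i, i < J * N → ω i = ωv i := by
            intro i hi
            have h := hω (Fin.castAdd (nn q) ⟨i, hi⟩)
            rw [Fin.append_left] at h
            rw [hωv, extWord_agree (J * N) v i hi]
            exact h
          have horb : orbit F x (J * N) ω = orbit F x (J * N) ωv :=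
            orbit_congr F x (J * N) hagree
          intro i hi
          rw [horb] at hi ⊢
          have h := hω (Fin.natAdd (J * N) ⟨i, hi⟩)
          rw [Fin.append_right] at h
          exact h
  -- conclusion
  refine ⟨⋂ J, Fail J, MeasurableSet.iInter fail_meas, ?_, ?_⟩
  · have hlim : Filter.Tendsto (fun J : ℕ => (1 - β) ^ J) Filter.atTop (nhds 0) :=
      ENNReal.tendsto_pow_atTop_nhds_zero_of_lt_one
        (ENNReal.sub_lt_self ENNReal.one_ne_top one_ne_zero hβ0)
    have hle : μ (⋂ J, Fail J) ≤ 0 :=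
      ge_of_tendsto' hlim (fun J => le_trans (measure_mono (Set.iInter_subset _ J)) (bound J))
    exact le_antisymm hle zero_le
  · intro ω hω
    simp only [Set.mem_iInter, hFail, Set.mem_setOf_eq, not_forall] at hω
    obtain ⟨J, j, hj, hmem⟩ := hω
    exact succ_chain (j * N) ω (not_not.1 hmem)

end Stmt9Aux

theorem stmt9 {X : Type*} [MetricSpace X] [CompactSpace X] {k : ℕ}
    (f : Fin k → X ≃ₜ X)
    (hct : ∀ p q : X, ∀ δ : ℝ, 0 < δ →
      ∃ ω : ℕ → Fin k, isChain (fun i => ⇑(f i)) δ ω p q)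
    (μ : Measure (ℕ → Fin k)) [IsProbabilityMeasure μ]
    (pw : Fin k → ℝ≥0∞) (hpos : ∀ i, 0 < pw i) (hsum : ∑ i, pw i = 1)
    (hcyl : ∀ (n : ℕ) (w : Fin n → Fin k),
      μ {ω | ∀ i : Fin n, ω i = w i} = ∏ i, pw (w i)) :
    ∀ x : X, ∃ Ω : Set (ℕ → Fin k), μ Ω = 1 ∧
      ∀ ω ∈ Ω, ∀ y : X, ∀ δ : ℝ, 0 < δ → isChain (fun i => ⇑(f i)) δ ω x y := by
  intro x
  classical
  obtain ⟨D, hDc, hDd⟩ := TopologicalSpace.exists_countable_dense X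
  have hmain : ∀ (y : X) (m : ℕ), ∃ B : Set (ℕ → Fin k), MeasurableSet B ∧ μ B = 0 ∧
      ∀ ω ∉ B, isChain (fun i => ⇑(f i)) (1 / (m + 1)) ω x y := fun y m =>
    Stmt9Aux.chain_null f hct μ pw hpos hsum hcyl x y (1 / (m + 1)) (by positivity)
  choose B hBmeas hBnull hBchain using hmain
  refine ⟨(⋃ y ∈ D, ⋃ m : ℕ, B y m)ᶜ, ?_, ?_⟩
  · have hmeas : MeasurableSet (⋃ y ∈ D, ⋃ m : ℕ, B y m) :=
      MeasurableSet.biUnion hDc fun y _ => MeasurableSet.iUnion fun m => hBmeas y m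
    have hnull : μ (⋃ y ∈ D, ⋃ m : ℕ, B y m) = 0 :=
      (measure_biUnion_null_iff hDc).2 fun y _ =>
        measure_iUnion_null_iff.2 fun m => hBnull y m
    have h := measure_add_measure_compl (μ := μ) hmeas
    rwa [hnull, zero_add, measure_univ] at h
  · intro ω hω y δ hδ
    obtain ⟨m, hm⟩ := exists_nat_one_div_lt (show (0 : ℝ) < δ / 4 by linarith)
    obtain ⟨y', hy'D, hy'⟩ := hDd.exists_mem_open Metric.isOpen_ball
      ⟨y, Metric.mem_ball_self (show (0 : ℝ) < δ / 4 by linarith)⟩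
    rw [Metric.mem_ball] at hy'
    have hωB : ω ∉ B y' m := fun hmem =>
      hω (Set.mem_biUnion hy'D (Set.mem_iUnion.2 ⟨m, hmem⟩))
    obtain ⟨n, hn, c, hc0, hcn, hstep⟩ := hBchain y' m ω hωB
    refine ⟨n, hn, Function.update c n y, ?_, Function.update_self _ _ _, ?_⟩
    · rw [Function.update_of_ne (by omega)]; exact hc0
    · intro i hi
      by_cases hlast : i + 1 = n
      · rw [hlast, Function.update_self, Function.update_of_ne (show i ≠ n by omega)]
        have h1 : dist y ((f (ω i)) (c i)) ≤ dist y y' + dist y' ((f (ω i)) (c i)) :=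
          dist_triangle _ _ _
        have h2 : dist y' ((f (ω i)) (c i)) < 1 / (m + 1) := by
          have := hstep i hi
          rwa [show i + 1 = n from hlast, hcn] at this
        have h3 : dist y y' < δ / 4 := by rw [dist_comm]; exact hy'
        calc dist y ((f (ω i)) (c i)) ≤ dist y y' + dist y' ((f (ω i)) (c i)) := h1
          _ < δ / 4 + 1 / (m + 1) := by linarith
          _ < δ := by linarith
      · rw [Function.update_of_ne hlast, Function.update_of_ne (show i ≠ n by omega)]
        exact lt_trans (hstep i hi) (by linarith)
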